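/- arXiv:1805.02040 — 3 statements merged into one kernel-verified Lean document; each statement's English description precedes it below -/
import Mathlib

section
/- Let R be a discrete valuation ring with valuation v, and let x = (x_{ij}) be a 2×n matrix over R whose first entry is of the form 1+x11 with x11 in the maximal ideal, and all other entries x_{ij} lie in the maximal ideal. For 1 ≤ i < j ≤ n, let M_{ij} = x_{1i}x_{2j} − x_{1j}x_{2i} be the 2×2 minor on columns i and j. Then the minimum of v(M_{ij}) over all pairs 1 ≤ i < j ≤ n equals the minimum of v(M_{1j}) over j in {2,...,n}. -/
open IsDiscreteValuationRing IsLocalRing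

theorem addVal_neg' {R : Type*} [CommRing R] [IsDomain R] [IsDiscreteValuationRing R]
    (a : R) : addVal R (-a) = addVal R a :=
  le_antisymm (addVal_le_iff_dvd.mpr (neg_dvd.mpr dvd_rfl))
    (addVal_le_iff_dvd.mpr (dvd_neg.mpr dvd_rfl))

theorem addVal_sub' {R : Type*} [CommRing R] [IsDomain R] [IsDiscreteValuationRing R]
    (a c : R) : min (addVal R a) (addVal R c) ≤ addVal R (a - c) := by
  have h := (addVal R).map_add a (-c)
  rw [addVal_neg'] at h
  simpa [sub_eq_add_neg] using h

theorem addVal_isUnit {R : Type*} [CommRing R] [IsDomain R] [IsDiscreteValuationRing R]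
    {u : R} (hu : IsUnit u) : addVal R u = 0 := by
  have h1 : addVal R u ≤ addVal R 1 := addVal_le_iff_dvd.mpr hu.dvd
  rw [addVal_one] at h1
  exact le_antisymm h1 zero_le

/-- Lemma 2.4 (Lemma:Minors): for a 2×n matrix over a DVR whose (1,1)-entry is
`1 + x₁₁` with `x₁₁` in the maximal ideal and all other entries in the maximal
ideal, the minimum of the valuations of all 2×2 minors `M i j` (i < j) equals
the minimum over the minors `M 0 j` involving the first column. -/
theorem stmt1 (R : Type*) [CommRing R] [IsDomain R] [IsDiscreteValuationRing R]
    (n : ℕ) (hn : 0 < n) (b : Fin 2 → Fin n → R)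
    (hb : ∀ k j, b k j ∈ IsLocalRing.maximalIdeal R)
    (x : Fin 2 → Fin n → R)
    (hx : x = fun k j => (if k = 0 ∧ j = (⟨0, hn⟩ : Fin n) then 1 else 0) + b k j) :
    (Finset.univ.inf fun p : Fin n × Fin n =>
        if p.1 < p.2 then
          addVal R (x 0 p.1 * x 1 p.2 - x 0 p.2 * x 1 p.1)
        else (⊤ : ℕ∞))
      = Finset.univ.inf fun j : Fin n =>
          if (⟨0, hn⟩ : Fin n) < j then
            addVal R (x 0 ⟨0, hn⟩ * x 1 j - x 0 j * x 1 ⟨0, hn⟩)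
          else (⊤ : ℕ∞) := by
  set z : Fin n := ⟨0, hn⟩ with hz
  -- x 0 z is a unit
  have hxz : x 0 z = 1 + b 0 z := by rw [hx]; simp
  have hunit : IsUnit (x 0 z) := by
    rw [hxz]
    have : (1 : R) + b 0 z = 1 - (-(b 0 z)) := by ring
    rw [this]
    exact isUnit_one_sub_self_of_mem_nonunits _ (neg_mem (hb 0 z))
  have hvz : addVal R (x 0 z) = 0 := addVal_isUnit hunit
  apply le_antisymm
  · refine Finset.le_inf fun j _ => ?_
    exact Finset.inf_le (Finset.mem_univ (z, j))
  · refine Finset.le_inf fun p _ => ?_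
    obtain ⟨i, j⟩ := p
    dsimp only
    by_cases hij : i < j
    · rw [if_pos hij]
      by_cases hiz : i = z
      · subst hiz
        have := Finset.inf_le (s := (Finset.univ : Finset (Fin n)))
          (f := fun j : Fin n => if z < j then
            addVal R (x 0 z * x 1 j - x 0 j * x 1 z) else (⊤ : ℕ∞)) (Finset.mem_univ j)
        simpa only [if_pos hij] using this
      · -- z < i < j
        have hzi : z < i := lt_of_le_of_ne (by simp [Fin.le_def, hz]) (Ne.symm hiz)
        have hzj : z < j := lt_trans hzi hij
        have key : x 0 z * (x 0 i * x 1 j - x 0 j * x 1 i)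
            = x 0 i * (x 0 z * x 1 j - x 0 j * x 1 z)
              - x 0 j * (x 0 z * x 1 i - x 0 i * x 1 z) := by ring
        have hv : addVal R (x 0 i * x 1 j - x 0 j * x 1 i)
            = addVal R (x 0 i * (x 0 z * x 1 j - x 0 j * x 1 z)
              - x 0 j * (x 0 z * x 1 i - x 0 i * x 1 z)) := by
          rw [← key, addVal_mul, hvz, zero_add]
        rw [hv]
        have h1 : (Finset.univ.inf fun j : Fin n => if z < j then
            addVal R (x 0 z * x 1 j - x 0 j * x 1 z) else (⊤ : ℕ∞))
            ≤ addVal R (x 0 z * x 1 j - x 0 j * x 1 z) := by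
          have := Finset.inf_le (s := (Finset.univ : Finset (Fin n)))
            (f := fun j : Fin n => if z < j then
              addVal R (x 0 z * x 1 j - x 0 j * x 1 z) else (⊤ : ℕ∞)) (Finset.mem_univ j)
          simpa only [if_pos hzj] using this
        have h2 : (Finset.univ.inf fun j : Fin n => if z < j then
            addVal R (x 0 z * x 1 j - x 0 j * x 1 z) else (⊤ : ℕ∞))
            ≤ addVal R (x 0 z * x 1 i - x 0 i * x 1 z) := by
          have := Finset.inf_le (s := (Finset.univ : Finset (Fin n)))
            (f := fun j : Fin n => if z < j then
              addVal R (x 0 z * x 1 j - x 0 j * x 1 z) else (⊤ : ℕ∞)) (Finset.mem_univ i)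
          simpa only [if_pos hzi] using this
        refine le_trans (le_min ?_ ?_) (addVal_sub' _ _)
        · rw [addVal_mul]; exact le_trans h1 le_add_self
        · rw [addVal_mul]; exact le_trans h2 le_add_self
    · rw [if_neg hij]; exact le_top
end

section
/- For every n ≥ 1, the signed descent generating function of the hyperoctahedral group satisfies: the sum over all w in B_n of (−1)^{neg(w)} Z^{des(w)} equals (1−Z)^n, where neg(w) is the number of i in {1,...,n} with w(i) < 0 and des(w) is the number of descents of w (positions i in {0,1,...,n−1} with w(i) > w(i+1), with w(0) := 0). -/
/- The hyperoctahedral group `B_n`, modelled as permutations `w` of `ℤ` that are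
odd (`w(−i) = −w(i)`) and fix every `i` with `|i| > n`; statistics on it. -/
def isBn (n : ℕ) (w : Equiv.Perm ℤ) : Prop :=
  (∀ i : ℤ, w (-i) = - w i) ∧ ∀ i : ℤ, (n : ℤ) < |i| → w i = i

/- number of negative entries -/
noncomputable def negStat (n : ℕ) (w : Equiv.Perm ℤ) : ℕ :=
  ((Finset.Icc (1 : ℤ) (n : ℤ)).filter fun i => w i < 0).card

/- descent number: descents in positions 0,…,n−1 (note w(0) = 0 for w ∈ Bₙ) -/
noncomputable def desStat (n : ℕ) (w : Equiv.Perm ℤ) : ℕ :=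
  ((Finset.Ico (0 : ℤ) (n : ℤ)).filter fun i => w (i + 1) < w i).card

/- inversion number -/
noncomputable def invStat (n : ℕ) (w : Equiv.Perm ℤ) : ℕ :=
  (((Finset.Icc (1 : ℤ) (n : ℤ)) ×ˢ (Finset.Icc (1 : ℤ) (n : ℤ))).filter
    fun p => p.1 < p.2 ∧ w p.2 < w p.1).card

/- number of negative sum pairs -/
noncomputable def nspStat (n : ℕ) (w : Equiv.Perm ℤ) : ℕ :=
  (((Finset.Icc (1 : ℤ) (n : ℤ)) ×ˢ (Finset.Icc (1 : ℤ) (n : ℤ))).filter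
    fun p => p.1 ≠ p.2 ∧ w p.1 + w p.2 < 0).card

/- Coxeter length, ℓ = inv + neg + nsp -/
noncomputable def lenStat (n : ℕ) (w : Equiv.Perm ℤ) : ℕ :=
  invStat n w + negStat n w + nspStat n w

/- the longest element w₀ = [−1,…,−n] of Bₙ -/
def wzero (n : ℕ) : Equiv.Perm ℤ :=
  Function.Involutive.toPerm (fun i => if |i| ≤ (n : ℤ) then -i else i) (by
    intro i
    by_cases h : |i| ≤ (n : ℤ) <;> simp [h, abs_neg])

/- Reiner's identity: ∑_{w ∈ Bₙ} (−1)^{neg(w)} Z^{des(w)} = (1 − Z)ⁿ in ℚ[Z]. -/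
namespace ReinerAux

variable {n : ℕ} {w v : Equiv.Perm ℤ}

lemma zero_eq (h : isBn n w) : w 0 = 0 := by
  have h0 := h.1 0
  rw [neg_zero] at h0
  omega

lemma wabs_le (h : isBn n w) {i : ℤ} (hi : |i| ≤ (n:ℤ)) : |w i| ≤ (n:ℤ) := by
  by_contra hc
  push_neg at hc
  have h2 : w (w i) = w i := h.2 _ hc
  have h3 : w i = i := by
    have := congrArg w.symm h2
    simpa using this
  rw [h3] at hc
  linarith

lemma isBn_symm (h : isBn n w) : isBn n w.symm := by
  refine ⟨fun i => ?_, fun i hi => ?_⟩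
  · apply w.injective
    have h1 := h.1 (w.symm i)
    rw [Equiv.apply_symm_apply] at h1
    rw [Equiv.apply_symm_apply, h1]
  · rw [Equiv.symm_apply_eq]
    exact (h.2 i hi).symm

lemma finite_setBn (n : ℕ) : {w : Equiv.Perm ℤ | isBn n w}.Finite := by
  rw [← Set.finite_coe_iff]
  let F : {w : Equiv.Perm ℤ | isBn n w} →
      (Finset.Icc (-(n:ℤ)) (n:ℤ) → Finset.Icc (-(n:ℤ)) (n:ℤ)) :=
    fun w i => ⟨w.1 i.1, by
      have hi : |(i.1 : ℤ)| ≤ (n:ℤ) := by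
        have h2 := i.2
        rw [Finset.mem_Icc] at h2
        rw [abs_le]; exact h2
      have := wabs_le w.2 hi
      rw [Finset.mem_Icc, ← abs_le]; exact this⟩
  have hF : Function.Injective F := by
    intro a b hab
    apply Subtype.ext
    apply Equiv.ext
    intro i
    by_cases hi : |i| ≤ (n:ℤ)
    · have hmem : i ∈ Finset.Icc (-(n:ℤ)) (n:ℤ) := by rw [Finset.mem_Icc, ← abs_le]; exact hi
      have := congrFun hab ⟨i, hmem⟩
      exact Subtype.ext_iff.mp this
    · push_neg at hi
      rw [a.2.2 i hi, b.2.2 i hi]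
  exact Finite.of_injective F hF

noncomputable def BnF (n : ℕ) : Finset (Equiv.Perm ℤ) := (finite_setBn n).toFinset

lemma mem_BnF : w ∈ BnF n ↔ isBn n w := by
  simp [BnF, Set.Finite.mem_toFinset]

def rr (n : ℕ) : Equiv.Perm ℤ := Equiv.swap ((n:ℤ)+1) (-((n:ℤ)+1))

lemma rr_fix {x : ℤ} (hx : |x| ≠ (n:ℤ)+1) : rr n x = x := by
  apply Equiv.swap_apply_of_ne_of_ne
  · intro h; apply hx; rw [h, abs_of_nonneg (by positivity)]
  · intro h; apply hx; rw [h, abs_neg, abs_of_nonneg (by positivity)]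

lemma rr_left : rr n ((n:ℤ)+1) = -((n:ℤ)+1) := Equiv.swap_apply_left _ _

lemma rr_right : rr n (-((n:ℤ)+1)) = (n:ℤ)+1 := Equiv.swap_apply_right _ _

lemma rr_neg (x : ℤ) : rr n (-x) = - rr n x := by
  rcases eq_or_ne (|x|) ((n:ℤ)+1) with hx | hx
  · rw [abs_eq (by positivity : (0:ℤ) ≤ (n:ℤ)+1)] at hx
    rcases hx with rfl | rfl
    · rw [rr_left, rr_right, neg_neg]
    · rw [neg_neg, rr_left, rr_right]
  · rw [rr_fix (by rwa [abs_neg]), rr_fix hx]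

lemma isBn_rr_mul (h : isBn (n+1) w) : isBn (n+1) (rr n * w) := by
  refine ⟨fun i => ?_, fun i hi => ?_⟩
  · rw [Equiv.Perm.mul_apply, Equiv.Perm.mul_apply, h.1, rr_neg]
  · rw [Equiv.Perm.mul_apply, h.2 i hi]
    push_cast at hi
    exact rr_fix (by linarith)

lemma isBn_succ (h : isBn n w) : isBn (n+1) w :=
  ⟨h.1, fun i hi => h.2 i (by push_cast at hi; linarith)⟩

lemma mem_A_iff : (isBn (n+1) w ∧ w ((n:ℤ)+1) = (n:ℤ)+1) ↔ isBn n w := by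
  constructor
  · rintro ⟨h, hw⟩
    refine ⟨h.1, fun i hi => ?_⟩
    rcases lt_or_ge ((n:ℤ)+1) (|i|) with h2 | h2
    · exact h.2 i (by push_cast; linarith)
    · have h3 : |i| = (n:ℤ)+1 := le_antisymm h2 (by linarith)
      rw [abs_eq (by positivity : (0:ℤ) ≤ (n:ℤ)+1)] at h3
      rcases h3 with rfl | rfl
      · exact hw
      · rw [h.1, hw]
  · intro h
    have h0 : (n:ℤ) < |(n:ℤ)+1| := by
      rw [abs_of_nonneg (by positivity)]; linarith
    exact ⟨isBn_succ h, h.2 _ h0⟩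

lemma fix_top (h : isBn n w) : w ((n:ℤ)+1) = (n:ℤ)+1 :=
  h.2 _ (by rw [abs_of_nonneg (by positivity : (0:ℤ) ≤ (n:ℤ)+1)]; linarith)

lemma cast_succ : ((n+1:ℕ):ℤ) = (n:ℤ)+1 := by push_cast; ring

lemma ico_insert : Finset.Ico (0:ℤ) ((n:ℤ)+1) = insert (n:ℤ) (Finset.Ico (0:ℤ) (n:ℤ)) := by
  ext i; simp only [Finset.mem_Ico, Finset.mem_insert]; omega

lemma icc_insert : Finset.Icc (1:ℤ) ((n:ℤ)+1) = insert ((n:ℤ)+1) (Finset.Icc (1:ℤ) (n:ℤ)) := by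
  ext i; simp only [Finset.mem_Icc, Finset.mem_insert]; omega

lemma desStat_A (h : isBn n w) : desStat (n+1) w = desStat n w := by
  unfold desStat
  rw [cast_succ, ico_insert, Finset.filter_insert, if_neg]
  · intro hc
    have h1 : w ((n:ℤ)+1) = (n:ℤ)+1 := fix_top h
    have h2 : |w (n:ℤ)| ≤ (n:ℤ) := wabs_le h (by rw [abs_of_nonneg (by positivity)])
    rw [h1] at hc
    have := abs_le.mp h2
    linarith

lemma negStat_A (h : isBn n w) : negStat (n+1) w = negStat n w := by
  unfold negStat
  rw [cast_succ, icc_insert, Finset.filter_insert, if_neg]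
  · rw [fix_top h]
    intro hc; linarith [hc]

lemma fix_small (h : isBn n v) {x : ℤ} (h0 : 0 ≤ x) (h1 : x ≤ (n:ℤ)) :
    rr n (v x) = v x := by
  have h2 := wabs_le h (by rw [abs_of_nonneg h0]; exact h1)
  exact rr_fix (by intro hc; linarith)

lemma desStat_C (h : isBn n v) : desStat (n+1) (rr n * v) = desStat n v + 1 := by
  unfold desStat
  rw [cast_succ, ico_insert, Finset.filter_insert, if_pos]
  · rw [Finset.card_insert_of_notMem, Finset.filter_congr (q := fun i => v (i+1) < v i)]
    · intro i hi
      rw [Finset.mem_Ico] at hi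
      rw [Equiv.Perm.mul_apply, Equiv.Perm.mul_apply,
        fix_small h (by linarith [hi.1]) (by linarith [hi.2]),
        fix_small h hi.1 (by linarith [hi.2])]
    · intro hc
      have := Finset.mem_of_mem_filter _ hc
      rw [Finset.mem_Ico] at this
      linarith [this.2]
  · rw [Equiv.Perm.mul_apply, Equiv.Perm.mul_apply, fix_top h, rr_left,
      fix_small h (by positivity) le_rfl]
    have := abs_le.mp (wabs_le h (le_of_eq (abs_of_nonneg (by positivity))))
    linarith [this.1]

lemma negStat_C (h : isBn n v) : negStat (n+1) (rr n * v) = negStat n v + 1 := by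
  unfold negStat
  rw [cast_succ, icc_insert, Finset.filter_insert, if_pos]
  · rw [Finset.card_insert_of_notMem, Finset.filter_congr (q := fun i => v i < 0)]
    · intro i hi
      rw [Finset.mem_Icc] at hi
      rw [Equiv.Perm.mul_apply, fix_small h (by linarith [hi.1]) hi.2]
    · intro hc
      have := Finset.mem_of_mem_filter _ hc
      rw [Finset.mem_Icc] at this
      linarith [this.2]
  · rw [Equiv.Perm.mul_apply, fix_top h, rr_left]
    linarith


variable {n : ℕ} {w : Equiv.Perm ℤ}

lemma key_R (h : isBn (n+1) w) (hp : w ((n:ℤ)+1) ≠ (n:ℤ)+1)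
    (hq : w ((n:ℤ)+1) ≠ -((n:ℤ)+1)) :
    desStat (n+1) (rr n * w) = desStat (n+1) w ∧
      Odd (negStat (n+1) (rr n * w) + negStat (n+1) w) := by
  classical
  set j : ℤ := w.symm ((n:ℤ)+1) with hjdef
  have hwj : w j = (n:ℤ)+1 := w.apply_symm_apply _
  have hwnj : w (-j) = -((n:ℤ)+1) := by rw [h.1, hwj]
  have hj_abs : |j| ≤ (n:ℤ)+1 := by
    have := wabs_le (isBn_symm h) (i := (n:ℤ)+1)
      (by rw [cast_succ, abs_of_nonneg (by positivity : (0:ℤ) ≤ (n:ℤ)+1)])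
    rw [cast_succ] at this
    exact this
  have hj0 : j ≠ 0 := by
    intro hc
    rw [hc, zero_eq h] at hwj
    have : (0:ℤ) ≤ (n:ℤ) := by positivity
    linarith
  have hjp : j ≠ (n:ℤ)+1 := by
    intro hc; apply hp
    rw [hc] at hwj; exact hwj
  have hjq : j ≠ -((n:ℤ)+1) := by
    intro hc; apply hq
    rw [hc] at hwj
    have h2 := h.1 ((n:ℤ)+1)
    rw [hwj] at h2
    linarith
  set k : ℤ := |j| with hkdef
  have hk1 : 1 ≤ k := Int.one_le_abs (by exact hj0)
  have hkn : k ≠ (n:ℤ)+1 := by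
    intro hc
    rw [hkdef] at hc
    rcases abs_eq (by positivity : (0:ℤ) ≤ (n:ℤ)+1) |>.mp hc with h1 | h1
    · exact hjp h1
    · exact hjq h1
  have hk2 : k ≤ (n:ℤ) := by
    have : k ≤ (n:ℤ)+1 := hj_abs
    rcases lt_or_eq_of_le this with h1 | h1
    · linarith
    · exact absurd h1 hkn
  have hwk : w k = (n:ℤ)+1 ∨ w k = -((n:ℤ)+1) := by
    rcases abs_choice j with hc | hc
    · left; rw [hkdef, hc]; exact hwj
    · right; rw [hkdef, hc]; exact hwnj
  have hkey : ∀ x : ℤ, 0 ≤ x → x ≤ (n:ℤ)+1 → x ≠ k → |w x| ≤ (n:ℤ) := by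
    intro x hx0 hx1 hxk
    have hb : |w x| ≤ (n:ℤ)+1 := by
      have := wabs_le h (i := x) (by rw [cast_succ, abs_of_nonneg hx0]; exact hx1)
      rwa [cast_succ] at this
    have hne : |w x| ≠ (n:ℤ)+1 := by
      intro hc
      rcases abs_eq (by positivity : (0:ℤ) ≤ (n:ℤ)+1) |>.mp hc with h1 | h1
      · have : x = j := w.injective (by rw [hwj, h1])
        apply hxk
        rw [hkdef, ← this, abs_of_nonneg hx0]
      · have : x = -j := w.injective (by rw [hwnj, h1])
        apply hxk
        rw [hkdef, ← abs_neg j, ← this, abs_of_nonneg hx0]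
    rcases lt_or_eq_of_le hb with h1 | h1
    · linarith
    · exact absurd h1 hne
  have hfixw : ∀ x : ℤ, 0 ≤ x → x ≤ (n:ℤ)+1 → x ≠ k → (rr n * w) x = w x := by
    intro x hx0 hx1 hxk
    have := hkey x hx0 hx1 hxk
    rw [Equiv.Perm.mul_apply]
    exact rr_fix (by intro hc; linarith)
  have hrwk : (rr n * w) k = - w k := by
    rw [Equiv.Perm.mul_apply]
    rcases hwk with h1 | h1 <;> rw [h1]
    · rw [rr_left]
    · rw [rr_right, neg_neg]
  constructor
  · -- descents
    set t : Finset ℤ := {k-1, k} with htdef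
    have hsub : t ⊆ Finset.Ico (0:ℤ) ((n:ℤ)+1) := by
      intro x hx
      rw [htdef, Finset.mem_insert, Finset.mem_singleton] at hx
      rw [Finset.mem_Ico]
      rcases hx with rfl | rfl <;> omega
    have hsplit : ∀ u : Equiv.Perm ℤ,
        ((Finset.Ico (0:ℤ) ((n:ℤ)+1)).filter fun i => u (i+1) < u i).card
          = (((Finset.Ico (0:ℤ) ((n:ℤ)+1)) \ t).filter fun i => u (i+1) < u i).card
            + (t.filter fun i => u (i+1) < u i).card := by
      intro u
      rw [← Finset.card_union_of_disjoint
          (Finset.disjoint_filter_filter Finset.sdiff_disjoint),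
        ← Finset.filter_union, Finset.sdiff_union_of_subset hsub]
    have hdiff : (((Finset.Ico (0:ℤ) ((n:ℤ)+1)) \ t).filter fun i => (rr n * w) (i+1) < (rr n * w) i)
        = (((Finset.Ico (0:ℤ) ((n:ℤ)+1)) \ t).filter fun i => w (i+1) < w i) := by
      apply Finset.filter_congr
      intro x hx
      rw [Finset.mem_sdiff, Finset.mem_Ico, htdef, Finset.mem_insert, Finset.mem_singleton] at hx
      obtain ⟨⟨hx0, hx1⟩, hx2⟩ := hx
      push_neg at hx2
      rw [hfixw (x+1) (by linarith) (by linarith) (by omega),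
        hfixw x hx0 (by linarith) (by omega)]
    have hne' : k - 1 ≠ k := by omega
    have hv1 : |w (k-1)| ≤ (n:ℤ) := hkey (k-1) (by omega) (by omega) (by omega)
    have hv2 : |w (k+1)| ≤ (n:ℤ) := hkey (k+1) (by omega) (by omega) (by omega)
    have hv1' := abs_le.mp hv1
    have hv2' := abs_le.mp hv2
    have hfix1 : (rr n * w) (k-1) = w (k-1) := hfixw (k-1) (by omega) (by omega) (by omega)
    have hfix2 : (rr n * w) (k+1) = w (k+1) := hfixw (k+1) (by omega) (by omega) (by omega)
    have hkm : k - 1 + 1 = k := by ring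
    have htcard : (t.filter fun i => (rr n * w) (i+1) < (rr n * w) i).card
        = (t.filter fun i => w (i+1) < w i).card := by
      have hins : t = insert (k-1) {k} := htdef
      rcases hwk with h1 | h1
      · have hL : Finset.filter (fun i => (rr n * w) (i+1) < (rr n * w) i) t = {k-1} := by
          rw [hins, Finset.filter_insert, Finset.filter_singleton,
            if_pos (by rw [hkm, hrwk, hfix1, h1]; linarith [hv1'.1]),
            if_neg (by rw [hrwk, hfix2, h1]; push_neg; linarith [hv2'.1])]
          simp
        have hRt : Finset.filter (fun i => w (i+1) < w i) t = {k} := by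
          rw [hins, Finset.filter_insert, Finset.filter_singleton,
            if_neg (by rw [hkm, h1]; push_neg; linarith [hv1'.2]),
            if_pos (by rw [h1]; linarith [hv2'.2])]
        rw [hL, hRt]; simp
      · have hL : Finset.filter (fun i => (rr n * w) (i+1) < (rr n * w) i) t = {k} := by
          rw [hins, Finset.filter_insert, Finset.filter_singleton,
            if_neg (by rw [hkm, hrwk, hfix1, h1]; push_neg; linarith [hv1'.2]),
            if_pos (by rw [hrwk, hfix2, h1]; linarith [hv2'.2])]
        have hRt : Finset.filter (fun i => w (i+1) < w i) t = {k-1} := by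
          rw [hins, Finset.filter_insert, Finset.filter_singleton,
            if_pos (by rw [hkm, h1]; linarith [hv1'.1]),
            if_neg (by rw [h1]; push_neg; linarith [hv2'.1])]
          simp
        rw [hL, hRt]; simp
    unfold desStat
    rw [cast_succ, hsplit (rr n * w), hsplit w, hdiff, htcard]
  · -- negatives
    have hsub : ({k} : Finset ℤ) ⊆ Finset.Icc (1:ℤ) ((n:ℤ)+1) := by
      intro x hx
      rw [Finset.mem_singleton] at hx
      rw [Finset.mem_Icc]
      omega
    have hsplit : ∀ u : Equiv.Perm ℤ,
        ((Finset.Icc (1:ℤ) ((n:ℤ)+1)).filter fun i => u i < 0).card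
          = (((Finset.Icc (1:ℤ) ((n:ℤ)+1)) \ {k}).filter fun i => u i < 0).card
            + (({k} : Finset ℤ).filter fun i => u i < 0).card := by
      intro u
      rw [← Finset.card_union_of_disjoint
          (Finset.disjoint_filter_filter Finset.sdiff_disjoint),
        ← Finset.filter_union, Finset.sdiff_union_of_subset hsub]
    have hdiff : (((Finset.Icc (1:ℤ) ((n:ℤ)+1)) \ {k}).filter fun i => (rr n * w) i < 0)
        = (((Finset.Icc (1:ℤ) ((n:ℤ)+1)) \ {k}).filter fun i => w i < 0) := by
      apply Finset.filter_congr
      intro x hx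
      rw [Finset.mem_sdiff, Finset.mem_Icc, Finset.mem_singleton] at hx
      rw [hfixw x (by omega) (by omega) hx.2]
    have hone : (({k} : Finset ℤ).filter fun i => (rr n * w) i < 0).card
        + (({k} : Finset ℤ).filter fun i => w i < 0).card = 1 := by
      rw [Finset.filter_singleton, Finset.filter_singleton]
      rcases hwk with h1 | h1
      · rw [if_pos (by rw [hrwk, h1]; linarith), if_neg (by rw [h1]; push_neg; linarith)]
        simp
      · rw [if_neg (by rw [hrwk, h1]; push_neg; linarith), if_pos (by rw [h1]; linarith)]
        simp
    unfold negStat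
    rw [cast_succ, hsplit (rr n * w), hsplit w, hdiff, Nat.odd_iff]
    omega


open Polynomial

lemma sum_BnF (n : ℕ) :
    ∑ w ∈ BnF n, ((-1 : Polynomial ℚ) ^ negStat n w * (Polynomial.X : Polynomial ℚ) ^ desStat n w)
      = (1 - Polynomial.X) ^ n := by
  induction n with
  | zero =>
    have h1 : BnF 0 = {1} := by
      ext w
      simp only [mem_BnF, Finset.mem_singleton]
      constructor
      · intro h
        apply Equiv.ext
        intro i
        rcases eq_or_ne i 0 with rfl | hi
        · simpa using zero_eq h
        · have h2 : ((0:ℕ):ℤ) < |i| := by simpa using abs_pos.mpr hi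
          simpa using h.2 i h2
      · rintro rfl
        exact ⟨fun i => by simp, fun i hi => by simp⟩
    rw [h1, Finset.sum_singleton]
    have h2 : negStat 0 1 = 0 := by
      unfold negStat
      rw [show ((0:ℕ):ℤ) = (0:ℤ) from rfl, Finset.Icc_eq_empty (by norm_num),
        Finset.filter_empty, Finset.card_empty]
    have h3 : desStat 0 1 = 0 := by
      unfold desStat
      rw [show ((0:ℕ):ℤ) = (0:ℤ) from rfl, Finset.Ico_self, Finset.filter_empty,
        Finset.card_empty]
    rw [h2, h3]
    simp
  | succ n ih =>
    classical
    set m : ℤ := (n : ℤ) with hm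
    set f : Equiv.Perm ℤ → Polynomial ℚ :=
      fun w => (-1 : Polynomial ℚ) ^ negStat (n+1) w * (Polynomial.X : Polynomial ℚ) ^ desStat (n+1) w with hf
    have hrrinv : ∀ w : Equiv.Perm ℤ, rr n * (rr n * w) = w := by
      intro w
      rw [← mul_assoc]
      simp [rr, Equiv.swap_mul_self]
    -- the three pieces
    have hA : (BnF (n+1)).filter (fun w => w (m+1) = m+1) = BnF n := by
      ext w
      simp only [Finset.mem_filter, mem_BnF]
      exact mem_A_iff
    have hAsum : ∑ w ∈ (BnF (n+1)).filter (fun w => w (m+1) = m+1), f w = (1 - Polynomial.X) ^ n := by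
      rw [hA, ← ih]
      apply Finset.sum_congr rfl
      intro w hw
      have h := mem_BnF.mp hw
      simp only [hf]
      rw [desStat_A h, negStat_A h]
    have hCsum : ∑ w ∈ (BnF (n+1)).filter (fun w => w (m+1) = -(m+1)), f w
        = - Polynomial.X * (1 - Polynomial.X) ^ n := by
      have hbij : ∑ w ∈ (BnF (n+1)).filter (fun w => w (m+1) = -(m+1)), f w
          = ∑ v ∈ BnF n, ((-1 : Polynomial ℚ) ^ (negStat n v + 1)
              * (Polynomial.X : Polynomial ℚ) ^ (desStat n v + 1)) := by
        apply Finset.sum_nbij' (i := fun w => rr n * w) (j := fun v => rr n * v)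
        · intro w hw
          rw [Finset.mem_filter, mem_BnF] at hw
          obtain ⟨h1, h2⟩ := hw
          rw [mem_BnF]
          apply mem_A_iff.mp
          refine ⟨isBn_rr_mul h1, ?_⟩
          rw [Equiv.Perm.mul_apply, h2, rr_right]
        · intro v hv
          rw [mem_BnF] at hv
          rw [Finset.mem_filter, mem_BnF]
          refine ⟨isBn_rr_mul (isBn_succ hv), ?_⟩
          rw [Equiv.Perm.mul_apply, fix_top hv, rr_left]
        · intro w _; exact hrrinv w
        · intro v _; exact hrrinv v
        · intro w hw
          rw [Finset.mem_filter, mem_BnF] at hw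
          obtain ⟨h1, h2⟩ := hw
          have hv : isBn n (rr n * w) := by
            apply mem_A_iff.mp
            refine ⟨isBn_rr_mul h1, ?_⟩
            rw [Equiv.Perm.mul_apply, h2, rr_right]
          have hd := desStat_C hv
          have hg := negStat_C hv
          rw [hrrinv w] at hd hg
          simp only [hf]
          rw [hd, hg]
      rw [hbij, ← ih, Finset.mul_sum]
      apply Finset.sum_congr rfl
      intro v _
      rw [pow_succ, pow_succ]
      ring
    have hRsum : ∑ w ∈ (BnF (n+1)).filter (fun w => ¬ w (m+1) = m+1 ∧ ¬ w (m+1) = -(m+1)), f w = 0 := by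
      apply Finset.sum_involution (fun w _ => rr n * w)
      · intro w hw
        rw [Finset.mem_filter, mem_BnF] at hw
        obtain ⟨h1, h2, h3⟩ := hw
        obtain ⟨hdes, hodd⟩ := key_R h1 h2 h3
        rw [hf]
        simp only
        rw [hdes]
        rcases Nat.even_or_odd (negStat (n+1) w) with he | ho
        · have ho' : Odd (negStat (n+1) (rr n * w)) := by
            rcases Nat.even_or_odd (negStat (n+1) (rr n * w)) with he2 | ho2
            · exact absurd (Even.add he2 he) (Nat.not_even_iff_odd.mpr hodd)
            · exact ho2
          rw [he.neg_one_pow, ho'.neg_one_pow]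
          ring
        · have he' : Even (negStat (n+1) (rr n * w)) := by
            rcases Nat.even_or_odd (negStat (n+1) (rr n * w)) with he2 | ho2
            · exact he2
            · exfalso
              exact (Nat.not_even_iff_odd.mpr hodd) (Odd.add_odd ho2 ho)
          rw [ho.neg_one_pow, he'.neg_one_pow]
          ring
      · intro w hw _
        rw [Finset.mem_filter, mem_BnF] at hw
        intro hc
        have h2 := congrArg (fun σ : Equiv.Perm ℤ => σ (w.symm (m+1))) hc
        simp only [Equiv.Perm.mul_apply, Equiv.apply_symm_apply] at h2
        rw [rr_left] at h2
        have : (0:ℤ) ≤ m := by positivity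
        linarith
      · intro w hw
        rw [Finset.mem_filter, mem_BnF] at hw
        obtain ⟨h1, h2, h3⟩ := hw
        rw [Finset.mem_filter, mem_BnF]
        refine ⟨isBn_rr_mul h1, ?_, ?_⟩
        · rw [Equiv.Perm.mul_apply, rr_fix (by intro hc; rcases (abs_eq (by positivity : (0:ℤ) ≤ m+1)).mp hc with h4 | h4 <;> [exact h2 h4; exact h3 h4])]
          exact h2
        · rw [Equiv.Perm.mul_apply, rr_fix (by intro hc; rcases (abs_eq (by positivity : (0:ℤ) ≤ m+1)).mp hc with h4 | h4 <;> [exact h2 h4; exact h3 h4])]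
          exact h3
      · intro w _
        exact hrrinv w
    -- assemble
    have hstep1 := Finset.sum_filter_add_sum_filter_not (BnF (n+1)) (fun w => w (m+1) = m+1) f
    have hstep2 := Finset.sum_filter_add_sum_filter_not
      ((BnF (n+1)).filter (fun w => ¬ w (m+1) = m+1)) (fun w => w (m+1) = -(m+1)) f
    have hCeq : ((BnF (n+1)).filter (fun w => ¬ w (m+1) = m+1)).filter (fun w => w (m+1) = -(m+1))
        = (BnF (n+1)).filter (fun w => w (m+1) = -(m+1)) := by
      rw [Finset.filter_filter]
      apply Finset.filter_congr
      intro w _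
      constructor
      · exact fun h => h.2
      · intro h
        refine ⟨?_, h⟩
        rw [h]
        intro hc
        have : (0:ℤ) ≤ m := by positivity
        linarith
    have hReq : ((BnF (n+1)).filter (fun w => ¬ w (m+1) = m+1)).filter (fun w => ¬ w (m+1) = -(m+1))
        = (BnF (n+1)).filter (fun w => ¬ w (m+1) = m+1 ∧ ¬ w (m+1) = -(m+1)) := by
      rw [Finset.filter_filter]
    rw [hCeq, hReq, hCsum, hRsum] at hstep2
    rw [hAsum, ← hstep2] at hstep1
    calc ∑ w ∈ BnF (n+1), f w = (1 - Polynomial.X) ^ n + (- Polynomial.X * (1 - Polynomial.X) ^ n + 0) := hstep1.symm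
    _ = (1 - Polynomial.X) ^ (n+1) := by rw [pow_succ]; ring

end ReinerAux

theorem stmt4 (n : ℕ) (hn : 1 ≤ n) :
    ∑ᶠ w ∈ {w : Equiv.Perm ℤ | isBn n w},
        ((-1 : Polynomial ℚ) ^ negStat n w * (Polynomial.X : Polynomial ℚ) ^ desStat n w)
      = (1 - Polynomial.X) ^ n := by
  have h1 : {w : Equiv.Perm ℤ | isBn n w} = ↑(ReinerAux.BnF n) := by
    ext w
    simp [ReinerAux.mem_BnF]
  rw [h1, finsum_mem_coe_finset]
  exact ReinerAux.sum_BnF n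
end

section
/- For n ≥ 1 and δ ∈ {0,1}, set a = 2n+δ and consider the rational function Z(q, T1, T2) = (1 − q^{C(a−1,2)} T1^{a−1} T2) / ((1 − q^{C(a,2)} T2)(1 − q^{C(a,2)+1} T1^{a−1} T2)) in ℚ(q, T1, T2). Then Z satisfies the functional equation: substituting q → q^{−1}, T1 → T1^{−1}, T2 → T2^{−1} yields −q^{C(a+1,2)} T2 · Z(q, T1, T2). -/
noncomputable section

/- The field ℚ(q, T₁, T₂) of rational functions in three variables. -/
abbrev Kfun : Type := FractionRing (MvPolynomial (Fin 3) ℚ)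

def qv : Kfun := algebraMap (MvPolynomial (Fin 3) ℚ) Kfun (MvPolynomial.X 0)
def t1v : Kfun := algebraMap (MvPolynomial (Fin 3) ℚ) Kfun (MvPolynomial.X 1)
def t2v : Kfun := algebraMap (MvPolynomial (Fin 3) ℚ) Kfun (MvPolynomial.X 2)

/- Local bivariate conjugacy class zeta function of F_{n,δ}, a = 2n+δ. -/
def Zf (a : ℕ) (x u1 u2 : Kfun) : Kfun :=
  (1 - x ^ ((a - 1).choose 2) * u1 ^ (a - 1) * u2) /
    ((1 - x ^ (a.choose 2) * u2) * (1 - x ^ (a.choose 2 + 1) * u1 ^ (a - 1) * u2))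

lemma alg_ne_zero {p : MvPolynomial (Fin 3) ℚ} (hp : p ≠ 0) :
    algebraMap (MvPolynomial (Fin 3) ℚ) Kfun p ≠ 0 := by
  intro h
  exact hp (IsFractionRing.injective (MvPolynomial (Fin 3) ℚ) Kfun (by simpa using h))

lemma qv_ne : qv ≠ 0 := alg_ne_zero (MvPolynomial.X_ne_zero 0)
lemma t1v_ne : t1v ≠ 0 := alg_ne_zero (MvPolynomial.X_ne_zero 1)
lemma t2v_ne : t2v ≠ 0 := alg_ne_zero (MvPolynomial.X_ne_zero 2)

lemma poly_ne (e b : ℕ) :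
    (1 : Kfun) - qv ^ e * t1v ^ b * t2v ≠ 0 := by
  have : (1 : Kfun) - qv ^ e * t1v ^ b * t2v =
      algebraMap (MvPolynomial (Fin 3) ℚ) Kfun
        (1 - MvPolynomial.X 0 ^ e * MvPolynomial.X 1 ^ b * MvPolynomial.X 2) := by
    simp [qv, t1v, t2v, map_sub, map_mul, map_pow, map_one]
  rw [this]
  apply alg_ne_zero
  intro h
  have h2 := congrArg (MvPolynomial.eval (0 : Fin 3 → ℚ)) h
  simp at h2

lemma poly_ne' (e : ℕ) : (1 : Kfun) - qv ^ e * t2v ≠ 0 := by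
  have := poly_ne e 0
  simpa using this

lemma key (b : ℕ) :
    Zf (b + 1) qv⁻¹ t1v⁻¹ t2v⁻¹ = -qv ^ ((b + 2).choose 2) * t2v * Zf (b + 1) qv t1v t2v := by
  have hx := qv_ne
  have h1 := t1v_ne
  have h2 := t2v_ne
  have hc1 : (b + 1).choose 2 = b.choose 2 + b := by
    simp [Nat.choose_succ_succ, Nat.choose_one_right]; omega
  have hc2 : (b + 2).choose 2 = b.choose 2 + (2 * b + 1) := by
    simp [Nat.choose_succ_succ, Nat.choose_one_right]; omega
  have hrw : ∀ (e c : ℕ), (1 : Kfun) - qv⁻¹ ^ e * t1v⁻¹ ^ c * t2v⁻¹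
      = (qv ^ e * t1v ^ c * t2v)⁻¹ * -(1 - qv ^ e * t1v ^ c * t2v) := by
    intro e c
    field_simp
    simp only [one_div, inv_pow]
    field_simp
    ring
  have hrw2 : ∀ (e : ℕ), (1 : Kfun) - qv⁻¹ ^ e * t2v⁻¹
      = (qv ^ e * t2v)⁻¹ * -(1 - qv ^ e * t2v) := by
    intro e
    field_simp
    simp only [one_div, inv_pow]
    field_simp
    ring
  simp only [Zf, Nat.add_sub_cancel, hc1, hc2, hrw, hrw2]
  have n1 := poly_ne (b.choose 2) b
  have n2 := poly_ne' (b.choose 2 + b)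
  have n3 := poly_ne (b.choose 2 + b + 1) b
  generalize b.choose 2 = m at *
  generalize hN : (1 : Kfun) - qv ^ m * t1v ^ b * t2v = N at *
  generalize hD1 : (1 : Kfun) - qv ^ (m + b) * t2v = D1 at *
  generalize hD2 : (1 : Kfun) - qv ^ (m + b + 1) * t1v ^ b * t2v = D2 at *
  simp only [inv_pow, div_eq_mul_inv, mul_inv_rev, inv_inv]
  field_simp [pow_add]
  ring

theorem stmt16 (n : ℕ) (hn : 1 ≤ n) (δ : ℕ) (hδ : δ ≤ 1) :
    Zf (2 * n + δ) qv⁻¹ t1v⁻¹ t2v⁻¹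
      = -qv ^ ((2 * n + δ + 1).choose 2) * t2v * Zf (2 * n + δ) qv t1v t2v := by
  obtain ⟨b, hb⟩ : ∃ b, 2 * n + δ = b + 1 := ⟨2 * n + δ - 1, by omega⟩
  rw [hb]
  exact key b
end
end
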